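/- Suppose hypothesis H1+ holds at t = a (for all sufficiently small ε > 0 the equation p(a,h) = a + ε has a solution h = h(a,ε) with h(a,ε) → 0 as ε → 0⁺) and the map h ↦ p(a,h) is continuous at h = 0. If the p-derivative D_p f(a) exists (as a finite limit), then f is right-continuous at a. -/

import Mathlib

open Filter Topology Set

/-- If `H1⁺` holds at `t = a` (for all sufficiently small `ε > 0`
the equation `p a h = a + ε` has a solution `h = hsol ε`, with `hsol ε → 0` as `ε → 0⁺`),
the map `h ↦ p a h` is continuous at `h = 0`, and the `p`-derivative
`D_p f (a) = lim_{h→0} (f (p a h) - f a)/h` exists (as a finite limit `L`),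
then `f` is right-continuous at `a`. -/
theorem p_differentiable_right_continuous
    (p : ℝ → ℝ → ℝ) (f : ℝ → ℝ) (a L : ℝ) (hsol : ℝ → ℝ)
    (hH1 : ∀ᶠ ε in 𝓝[>] (0 : ℝ), p a (hsol ε) = a + ε)
    (hsol0 : Tendsto hsol (𝓝[>] (0 : ℝ)) (𝓝 0))
    (hpcont : ContinuousAt (fun h => p a h) 0)
    (hD : Tendsto (fun h => (f (p a h) - f a) / h) (𝓝[≠] (0 : ℝ)) (𝓝 L)) :
    ContinuousWithinAt f (Ici a) a := by
  have h1 : Tendsto (fun ε => p a (hsol ε)) (𝓝[>] (0:ℝ)) (𝓝 (p a 0)) :=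
    hpcont.tendsto.comp hsol0
  have h2 : Tendsto (fun ε => p a (hsol ε)) (𝓝[>] (0:ℝ)) (𝓝 a) := by
    have hb : Tendsto (fun ε : ℝ => a + ε) (𝓝[>] (0:ℝ)) (𝓝 a) := by
      have h := (tendsto_const_nhds (x := a) (f := 𝓝[>] (0:ℝ))).add
        (tendsto_id.mono_left (nhdsWithin_le_nhds (s := Ioi (0:ℝ))))
      simpa using h
    exact hb.congr' (hH1.mono fun ε h => h.symm)
  have hp0 : p a 0 = a := tendsto_nhds_unique h1 h2
  have hne0 : ∀ᶠ ε in 𝓝[>] (0:ℝ), hsol ε ≠ 0 := by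
    filter_upwards [hH1, self_mem_nhdsWithin] with ε hε hpos h0
    rw [h0, hp0] at hε
    have : (0:ℝ) < ε := hpos
    linarith
  have hsol' : Tendsto hsol (𝓝[>] (0:ℝ)) (𝓝[≠] (0:ℝ)) :=
    tendsto_nhdsWithin_iff.2 ⟨hsol0, hne0⟩
  have hq : Tendsto (fun ε => (f (p a (hsol ε)) - f a) / hsol ε) (𝓝[>] (0:ℝ)) (𝓝 L) :=
    hD.comp hsol'
  have hdiff : Tendsto (fun ε => f (p a (hsol ε)) - f a) (𝓝[>] (0:ℝ)) (𝓝 0) := by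
    have hm := hq.mul hsol0
    rw [mul_zero] at hm
    refine hm.congr' ?_
    filter_upwards [hne0] with ε h
    field_simp
  have hf : Tendsto (fun ε => f (a + ε)) (𝓝[>] (0:ℝ)) (𝓝 (f a)) := by
    have hd2 := hdiff.congr' (hH1.mono fun ε h => by rw [h])
    have := hd2.add_const (f a)
    simpa using this
  rw [ContinuousWithinAt, show Ici a = insert a (Ioi a) by
        rw [Ioi_insert], nhdsWithin_insert]
  refine Tendsto.sup (tendsto_pure_nhds f a) ?_
  have hmap : Tendsto (fun x : ℝ => x - a) (𝓝[Ioi a] a) (𝓝[>] (0:ℝ)) := by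
    apply tendsto_nhdsWithin_of_tendsto_nhds_of_eventually_within
    · have h := (tendsto_id.mono_left (nhdsWithin_le_nhds (s := Ioi a))).sub
        (tendsto_const_nhds (x := a) (f := 𝓝[Ioi a] a))
      simpa using h
    · filter_upwards [self_mem_nhdsWithin] with x hx
      exact mem_Ioi.2 (sub_pos.2 (mem_Ioi.1 hx))
  have := hf.comp hmap
  refine this.congr fun x => ?_
  simp
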